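/- Let λ > 0 and s₀ < T be real numbers, let c ≥ 0, α ≥ 0, β ≥ 0, C ≥ 0, D ≥ 0 be constants with α ≥ β·C. Let y : ℝ → ℝ be differentiable on [s₀, T), and let z, h : ℝ → ℝ be continuous and nonnegative on [s₀, T). Assume: (i) y'(t) ≤ −λ·y(t) − α·z(t) + β·h(t) + c for all t ∈ [s₀, T); and (ii) ∫_{s₀}^{t} e^{λs}·h(s) ds ≤ C·∫_{s₀}^{t} e^{λs}·z(s) ds + D·e^{λs₀} for all t ∈ [s₀, T). Then for every t ∈ [s₀, T), y(t) ≤ e^{−λ(t−s₀)}·y(s₀) + c/λ + β·D; in particular, y is bounded above on [s₀, T) by a constant independent of t and of T. -/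

import Mathlib

open intervalIntegral in
/-- Abstract absorption lemma (analytic core of Lemma 3.1): if
    y' ≤ −λy − αz + βh + c on [s₀,T) and the weighted integral of h is
    controlled by that of z with α ≥ βC, then
    y(t) ≤ e^{−λ(t−s₀)} y(s₀) + c/λ + βD on [s₀,T). -/
theorem absorption_lemma
    (l s₀ T c α β C D : ℝ)
    (hl : 0 < l) (hsT : s₀ < T)
    (hc : 0 ≤ c) (hα : 0 ≤ α) (hβ : 0 ≤ β) (hC : 0 ≤ C) (hD : 0 ≤ D)
    (habsorb : β * C ≤ α)
    (y y' z h : ℝ → ℝ)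
    (hy : ∀ t ∈ Set.Ico s₀ T, HasDerivAt y (y' t) t)
    (hz : ContinuousOn z (Set.Ico s₀ T)) (hzpos : ∀ t ∈ Set.Ico s₀ T, 0 ≤ z t)
    (hh : ContinuousOn h (Set.Ico s₀ T)) (hhpos : ∀ t ∈ Set.Ico s₀ T, 0 ≤ h t)
    (hineq : ∀ t ∈ Set.Ico s₀ T, y' t ≤ -l * y t - α * z t + β * h t + c)
    (hint : ∀ t ∈ Set.Ico s₀ T,
      (∫ s in s₀..t, Real.exp (l * s) * h s) ≤
        C * (∫ s in s₀..t, Real.exp (l * s) * z s) + D * Real.exp (l * s₀)) :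
    ∀ t ∈ Set.Ico s₀ T,
      y t ≤ Real.exp (-l * (t - s₀)) * y s₀ + c / l + β * D := by
  intro t₁ ht₁
  obtain ⟨hs₀t₁, ht₁T⟩ := ht₁
  set gz : ℝ → ℝ := fun s => Real.exp (l * s) * z s with hgzdef
  set gh : ℝ → ℝ := fun s => Real.exp (l * s) * h s with hghdef
  have hexpcont : Continuous fun s : ℝ => Real.exp (l * s) := by continuity
  have hgzc : ContinuousOn gz (Set.Ico s₀ T) := hexpcont.continuousOn.mul hz
  have hghc : ContinuousOn gh (Set.Ico s₀ T) := hexpcont.continuousOn.mul hh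
  have hsub : Set.Icc s₀ t₁ ⊆ Set.Ico s₀ T := fun x hx => ⟨hx.1, lt_of_le_of_lt hx.2 ht₁T⟩
  have huIcc : Set.uIcc s₀ t₁ = Set.Icc s₀ t₁ := Set.uIcc_of_le hs₀t₁
  have hzint : MeasureTheory.IntegrableOn gz (Set.uIcc s₀ t₁) := by
    rw [huIcc]; exact (hgzc.mono hsub).integrableOn_compact isCompact_Icc
  have hhint : MeasureTheory.IntegrableOn gh (Set.uIcc s₀ t₁) := by
    rw [huIcc]; exact (hghc.mono hsub).integrableOn_compact isCompact_Icc
  set G : ℝ → ℝ := fun x => Real.exp (l * x) * y x + α * (∫ s in s₀..x, gz s)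
      - β * (∫ s in s₀..x, gh s) - (c / l) * Real.exp (l * x) with hGdef
  -- derivative of G at interior points
  have key : ∀ x ∈ Set.Ioo s₀ t₁,
      HasDerivAt G (Real.exp (l * x) * (y' x + l * y x + α * z x - β * h x - c)) x := by
    intro x hx
    have hxI : x ∈ Set.Ico s₀ T := hsub ⟨hx.1.le, hx.2.le⟩
    have hxO : x ∈ Set.Ioo s₀ T := ⟨hx.1, hx.2.trans ht₁T⟩
    have hopen : IsOpen (Set.Ioo s₀ T) := isOpen_Ioo
    have he : HasDerivAt (fun u => Real.exp (l * u)) (Real.exp (l * x) * (l * 1)) x :=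
      ((hasDerivAt_id x).const_mul l).exp
    have hyx := hy x hxI
    have hp := he.mul hyx
    have hsubu : Set.uIcc s₀ x ⊆ Set.uIcc s₀ t₁ :=
      Set.uIcc_subset_uIcc Set.left_mem_uIcc (by rw [huIcc]; exact ⟨hx.1.le, hx.2.le⟩)
    have hzx : HasDerivAt (fun u => ∫ s in s₀..u, gz s) (gz x) x := by
      refine intervalIntegral.integral_hasDerivAt_right
        (hzint.mono_set hsubu).intervalIntegrable
        ((hgzc.mono Set.Ioo_subset_Ico_self).stronglyMeasurableAtFilter hopen x hxO) ?_
      exact ((hgzc.mono Set.Ioo_subset_Ico_self) x hxO).continuousAt (hopen.mem_nhds hxO)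
    have hhx : HasDerivAt (fun u => ∫ s in s₀..u, gh s) (gh x) x := by
      refine intervalIntegral.integral_hasDerivAt_right
        (hhint.mono_set hsubu).intervalIntegrable
        ((hghc.mono Set.Ioo_subset_Ico_self).stronglyMeasurableAtFilter hopen x hxO) ?_
      exact ((hghc.mono Set.Ioo_subset_Ico_self) x hxO).continuousAt (hopen.mem_nhds hxO)
    have hGd := ((hp.add (hzx.const_mul α)).sub (hhx.const_mul β)).sub (he.const_mul (c / l))
    convert hGd using 1
    · rfl
    · rfl
    · rfl
    simp only [hgzdef, hghdef]
    field_simp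
    ring
  have hGanti : AntitoneOn G (Set.Icc s₀ t₁) := by
    apply antitoneOn_of_deriv_nonpos (convex_Icc _ _)
    · have h1 : ContinuousOn (fun x => Real.exp (l * x) * y x) (Set.Icc s₀ t₁) :=
        hexpcont.continuousOn.mul fun x hx =>
          ((hy x (hsub hx)).continuousAt).continuousWithinAt
      have h2 := intervalIntegral.continuousOn_primitive_interval
        (μ := MeasureTheory.volume) hzint
      have h3 := intervalIntegral.continuousOn_primitive_interval
        (μ := MeasureTheory.volume) hhint
      rw [huIcc] at h2 h3
      exact ((h1.add (h2.const_smul α)).sub (h3.const_smul β)).sub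
        (hexpcont.continuousOn.const_smul (c / l))
    · rw [interior_Icc]
      exact fun x hx => ((key x hx).differentiableAt).differentiableWithinAt
    · rw [interior_Icc]
      intro x hx
      rw [(key x hx).deriv]
      have hxI : x ∈ Set.Ico s₀ T := hsub ⟨hx.1.le, hx.2.le⟩
      have hb : y' x + l * y x + α * z x - β * h x - c ≤ 0 := by
        have := hineq x hxI; linarith
      exact mul_nonpos_of_nonneg_of_nonpos (Real.exp_pos _).le hb
  have hGle : G t₁ ≤ G s₀ :=
    hGanti ⟨le_refl s₀, hs₀t₁⟩ ⟨hs₀t₁, le_refl t₁⟩ hs₀t₁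
  have hGs₀ : G s₀ = Real.exp (l * s₀) * y s₀ - (c / l) * Real.exp (l * s₀) := by
    simp [hGdef]
  set Iz := ∫ s in s₀..t₁, gz s with hIz
  set Ih := ∫ s in s₀..t₁, gh s with hIh
  have hIznn : 0 ≤ Iz := by
    rw [hIz]
    apply intervalIntegral.integral_nonneg hs₀t₁
    intro u hu
    exact mul_nonneg (Real.exp_pos _).le (hzpos u (hsub hu))
  have hIhle : Ih ≤ C * Iz + D * Real.exp (l * s₀) := hint t₁ ⟨hs₀t₁, ht₁T⟩
  set E0 := Real.exp (l * s₀) with hE0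
  set E1 := Real.exp (l * t₁) with hE1
  have hE1pos : 0 < E1 := Real.exp_pos _
  have hE0E1 : E0 ≤ E1 := Real.exp_le_exp.2 (by nlinarith)
  have hbound : E1 * y t₁ ≤ E0 * y s₀ + β * D * E0 + (c / l) * (E1 - E0) := by
    have hGt₁ : G t₁ = E1 * y t₁ + α * Iz - β * Ih - (c / l) * E1 := rfl
    have h1 : β * Ih ≤ β * C * Iz + β * D * E0 := by
      have := mul_le_mul_of_nonneg_left hIhle hβ
      nlinarith
    have h2 : β * C * Iz ≤ α * Iz := mul_le_mul_of_nonneg_right habsorb hIznn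
    have := hGle
    rw [hGt₁, hGs₀] at this
    linarith
  have hEm : Real.exp (-l * (t₁ - s₀)) * E1 = E0 := by
    rw [hE1, hE0, ← Real.exp_add]; ring_nf
  have hclnn : 0 ≤ c / l := div_nonneg hc hl.le
  have h2 : E1 * y t₁ ≤ E1 * (Real.exp (-l * (t₁ - s₀)) * y s₀ + c / l + β * D) := by
    have hβDE : β * D * E0 ≤ β * D * E1 :=
      mul_le_mul_of_nonneg_left hE0E1 (mul_nonneg hβ hD)
    have hclE0 : 0 ≤ (c / l) * E0 := mul_nonneg hclnn (Real.exp_pos _).le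
    have expand : E1 * (Real.exp (-l * (t₁ - s₀)) * y s₀ + c / l + β * D)
        = E0 * y s₀ + (c / l) * E1 + β * D * E1 := by rw [← hEm]; ring
    rw [expand]
    linarith
  exact le_of_mul_le_mul_left h2 hE1pos
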